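/- Let A = (D,σ,d) be a nonassociative generalized cyclic Azumaya algebra and let k ∈ C be such that k = c⁻¹σ(c) for some c ∈ C^×. Then the automorphism H_{id,k} of A is the inner automorphism G_c given by G_c(∑ a_i t^i) = (c⁻¹ ∑ a_i t^i)·c, i.e., H_{id,k}(∑ a_i t^i) = ∑ a_i c⁻¹σ^i(c) t^i. -/
import Mathlib


open Finset

/-- The multiplication of the Petit algebra `(D,σ,d) = D[t;σ]/D[t;σ](t^m − d)` on
coefficient vectors `Fin m → D`. -/
def pmul {D : Type*} [Ring D] (σ : D ≃+* D) (d : D) (m : ℕ) (a b : Fin m → D) :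
    Fin m → D := fun k =>
  ∑ i : Fin m, ∑ j : Fin m,
    if (i : ℕ) + j = k then a i * (σ ^ (i : ℕ)) (b j)
    else if (i : ℕ) + j = (k : ℕ) + m then a i * (σ ^ (i : ℕ)) (b j) * (σ ^ (k : ℕ)) d
    else 0

/-- `C/S₀` is a cyclic Galois extension of degree `m` with group `⟨σ|_C⟩`, where `C` is the
center of `D` (Chase–Harrison–Rosenberg Galois coordinates). -/
def CenterCyclicGalois {D : Type*} [Ring D] (σ : D ≃+* D) (m : ℕ) : Prop :=
  0 < m ∧ (∀ c ∈ Subring.center D, (σ ^ m) c = c) ∧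
    ∀ j < m, ∃ (n : ℕ) (x y : Fin n → D),
      (∀ l, x l ∈ Subring.center D ∧ y l ∈ Subring.center D) ∧
      ∀ i < m, (∑ l, x l * (σ ^ i) (y l)) = if i = j then 1 else 0

/- helpers -/

lemma telescope {D : Type*} [Ring D] (σ : D ≃+* D) (c c' : D)
    (hc1 : c * c' = 1) (hc2 : c' * c = 1) : ∀ i : ℕ,
    ((List.range i).map fun l => (σ ^ l) (c' * σ c)).prod = c' * (σ ^ i) c := by
  intro i
  induction i with
  | zero =>
    simp only [List.range_zero, List.map_nil, List.prod_nil, pow_zero]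
    rw [show ((1 : D ≃+* D) c) = c from rfl, hc2]
  | succ n ih =>
    rw [List.range_succ, List.map_append, List.prod_append]
    simp only [List.map_cons, List.map_nil, List.prod_cons, List.prod_nil, mul_one, ih]
    have h1 : (σ ^ n) (c' * σ c) = (σ ^ n) c' * (σ ^ (n+1)) c := by
      rw [map_mul, pow_succ]; rfl
    rw [h1, ← mul_assoc, mul_assoc c', ← map_mul, hc1, map_one, mul_one]

lemma pmul_single_left {D : Type*} [Ring D] (σ : D ≃+* D) (d : D) (m : ℕ)
    (hm : 0 < m) (c' : D) (a : Fin m → D) :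
    pmul σ d m (Pi.single (⟨0, hm⟩ : Fin m) c') a = fun i => c' * a i := by
  funext kk
  unfold pmul
  rw [Finset.sum_eq_single (⟨0, hm⟩ : Fin m)]
  · rw [Finset.sum_eq_single kk]
    · simp only [Pi.single_eq_same, Fin.val_mk, pow_zero, Nat.zero_add]
      rw [if_pos trivial]
      rfl
    · intro j _ hj
      have h1 : ¬ ((((⟨0, hm⟩ : Fin m) : ℕ)) + (j:ℕ) = (kk:ℕ)) := by
        intro h; exact hj (Fin.ext (by simpa using h))
      have h2 : ¬ ((((⟨0, hm⟩ : Fin m) : ℕ)) + (j:ℕ) = (kk:ℕ) + m) := by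
        simp only [Fin.val_mk]; omega
      rw [if_neg h1, if_neg h2]
    · simp
  · intro i _ hi
    have hz : (Pi.single (⟨0, hm⟩ : Fin m) c' : Fin m → D) i = 0 :=
      Pi.single_eq_of_ne hi _
    simp [hz]
  · simp

lemma pmul_single_right {D : Type*} [Ring D] (σ : D ≃+* D) (d : D) (m : ℕ)
    (hm : 0 < m) (c : D) (a : Fin m → D) :
    pmul σ d m a (Pi.single (⟨0, hm⟩ : Fin m) c) = fun i => a i * (σ ^ (i:ℕ)) c := by
  funext kk
  unfold pmul
  rw [Finset.sum_eq_single kk]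
  · rw [Finset.sum_eq_single (⟨0, hm⟩ : Fin m)]
    · simp
    · intro j _ hj
      have hz : (Pi.single (⟨0, hm⟩ : Fin m) c : Fin m → D) j = 0 :=
        Pi.single_eq_of_ne hj _
      simp [hz]
    · simp
  · intro i _ hi
    rw [Finset.sum_eq_single (⟨0, hm⟩ : Fin m)]
    · have h1 : ¬ ((i:ℕ) + (((⟨0, hm⟩ : Fin m) : ℕ)) = (kk:ℕ)) := by
        intro h; exact hi (Fin.ext (by simpa using h))
      have h2 : ¬ ((i:ℕ) + (((⟨0, hm⟩ : Fin m) : ℕ)) = (kk:ℕ) + m) := by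
        simp only [Fin.val_mk]; omega
      rw [if_neg h1, if_neg h2]
    · intro j _ hj
      have hz : (Pi.single (⟨0, hm⟩ : Fin m) c : Fin m → D) j = 0 :=
        Pi.single_eq_of_ne hj _
      simp [hz]
    · simp
  · simp


/-- Let `A = (D,σ,d)` be a nonassociative generalized cyclic Azumaya algebra
and let `k = c⁻¹σ(c)` for some `c ∈ Cˣ`.  Then the automorphism `H_{id,k}` of `A` is the
inner automorphism `G_c : x ↦ (c⁻¹x)·c`; explicitly,
`H_{id,k}(∑ aᵢ tⁱ) = ∑ aᵢ c⁻¹σ^i(c) tⁱ = (c⁻¹ ∑ aᵢ tⁱ)·c`. -/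
theorem H_id_k_is_inner {D : Type*} [Ring D]
    (σ : D ≃+* D) (m : ℕ) (hGal : CenterCyclicGalois σ m)
    (d : D) (hd : IsUnit d)
    (c c' : D) (hcC : c ∈ Subring.center D) (hc'C : c' ∈ Subring.center D)
    (hc1 : c * c' = 1) (hc2 : c' * c = 1)
    (k : D) (hk : k = c' * σ c) :
    ∀ a : Fin m → D,
      (fun i : Fin m => a i * ((List.range (i : ℕ)).map fun l => (σ ^ l) k).prod)
        = pmul σ d m (pmul σ d m (Pi.single (⟨0, hGal.1⟩ : Fin m) c') a)
            (Pi.single (⟨0, hGal.1⟩ : Fin m) c) ∧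
      (fun i : Fin m => a i * ((List.range (i : ℕ)).map fun l => (σ ^ l) k).prod)
        = fun i : Fin m => a i * (c' * (σ ^ (i : ℕ)) c) := by

  intro a
  have h2 : (fun i : Fin m => a i * ((List.range (i : ℕ)).map fun l => (σ ^ l) k).prod)
      = fun i : Fin m => a i * (c' * (σ ^ (i : ℕ)) c) := by
    funext i
    rw [hk, telescope σ c c' hc1 hc2]
  refine ⟨?_, h2⟩
  rw [pmul_single_left σ d m hGal.1 c' a, pmul_single_right σ d m hGal.1 c, h2]
  funext i
  rw [← mul_assoc, (Subring.mem_center_iff.mp hc'C (a i)).symm]
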